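/- The symplectic representation Φ of Diff(S¹) is injective: if ψ₁ and ψ₂ are orientation-preserving C^∞ diffeomorphisms of S¹ with lifts φ₁, φ₂ of their inverses, and ψ₁.u = ψ₂.u as functions for every u ∈ H, then ψ₁ = ψ₂ as maps of the circle, i.e. φ₁(θ) ≡ φ₂(θ) (mod 2π) for all θ ∈ ℝ. -/
import Mathlib

open MeasureTheory

/-- Membership in `H`: `2π`-periodic complex-valued `C^∞` function with mean zero. -/
def MemH (u : ℝ → ℂ) : Prop :=
  ContDiff ℝ (⊤ : ℕ∞) u ∧ Function.Periodic u (2 * Real.pi) ∧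
    (1 / (2 * Real.pi) : ℂ) * ∫ θ in (0:ℝ)..(2 * Real.pi), u θ = 0

/-- The action of a diffeomorphism `ψ` of `S¹` on `u ∈ H`, expressed through the lift `φ` of
`ψ⁻¹`: `(ψ.u)(θ) = u(φ(θ)) − (1/2π)∫₀^{2π} u(φ(t)) dt`. -/
noncomputable def diffAct (φ : ℝ → ℝ) (u : ℝ → ℂ) : ℝ → ℂ := fun θ =>
  u (φ θ) - (1 / (2 * Real.pi) : ℂ) * ∫ t in (0:ℝ)..(2 * Real.pi), u (φ t)

lemma memH_exp (n : ℕ) (hn : n ≠ 0) :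
    MemH (fun θ : ℝ => Complex.exp ((n : ℂ) * Complex.I * θ)) := by
  have hexp1 : Complex.exp ((n : ℂ) * Complex.I * (2 * Real.pi)) = 1 := by
    have := Complex.exp_int_mul_two_pi_mul_I (n : ℤ)
    rw [← this]; push_cast; ring_nf
  have hcne : (n : ℂ) * Complex.I ≠ 0 :=
    mul_ne_zero (Nat.cast_ne_zero.mpr hn) Complex.I_ne_zero
  refine ⟨?_, ?_, ?_⟩
  · exact Complex.contDiff_exp.comp (contDiff_const.mul Complex.ofRealCLM.contDiff)
  · intro θ
    simp only [Complex.ofReal_add]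
    push_cast
    rw [mul_add, Complex.exp_add, hexp1, mul_one]
  · show (1 / (2 * Real.pi) : ℂ)
        * ∫ θ in (0:ℝ)..(2 * Real.pi), Complex.exp ((n : ℂ) * Complex.I * θ) = 0
    rw [integral_exp_mul_complex hcne]
    push_cast
    rw [hexp1]
    simp

/-- The symplectic representation `Φ` of `Diff(S¹)` is injective: if the actions of `ψ₁` and
`ψ₂` agree on every `u ∈ H`, then the lifts `φ₁, φ₂` of `ψ₁⁻¹, ψ₂⁻¹` agree modulo `2π`,
i.e. `ψ₁ = ψ₂` as maps of the circle. -/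
theorem representation_injective (φ₁ φ₂ : ℝ → ℝ)
    (hφ₁ : ContDiff ℝ (⊤ : ℕ∞) φ₁) (hφ₁' : ∀ θ, 0 < deriv φ₁ θ)
    (hlift₁ : ∀ θ, φ₁ (θ + 2 * Real.pi) = φ₁ θ + 2 * Real.pi)
    (hφ₂ : ContDiff ℝ (⊤ : ℕ∞) φ₂) (hφ₂' : ∀ θ, 0 < deriv φ₂ θ)
    (hlift₂ : ∀ θ, φ₂ (θ + 2 * Real.pi) = φ₂ θ + 2 * Real.pi)
    (h : ∀ u : ℝ → ℂ, MemH u → diffAct φ₁ u = diffAct φ₂ u) :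
    ∀ θ : ℝ, ∃ k : ℤ, φ₁ θ - φ₂ θ = 2 * Real.pi * k := by
  set E₁ : ℝ → ℂ := fun θ => Complex.exp (Complex.I * φ₁ θ) with hE₁
  set E₂ : ℝ → ℂ := fun θ => Complex.exp (Complex.I * φ₂ θ) with hE₂
  have h1 := h _ (memH_exp 1 one_ne_zero)
  have h2 := h _ (memH_exp 2 two_ne_zero)
  have key1 : ∀ θ, E₁ θ - E₂ θ = E₁ 0 - E₂ 0 := by
    intro θ
    have hθ := congrFun h1 θ
    have h0 := congrFun h1 0
    simp only [diffAct, Nat.cast_one, one_mul] at hθ h0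
    simp only [hE₁, hE₂]
    linear_combination hθ - h0
  have hsq : ∀ x : ℝ, Complex.exp (((2:ℕ) : ℂ) * Complex.I * x)
      = Complex.exp (Complex.I * x) ^ 2 := by
    intro x
    rw [show (((2:ℕ):ℂ) * Complex.I * (x:ℂ)) = (2:ℕ) * (Complex.I * x) by push_cast; ring,
      Complex.exp_nat_mul]
  have key2 : ∀ θ, E₁ θ ^ 2 - E₂ θ ^ 2 = E₁ 0 ^ 2 - E₂ 0 ^ 2 := by
    intro θ
    have hθ := congrFun h2 θ
    have h0 := congrFun h2 0
    simp only [diffAct, hsq] at hθ h0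
    simp only [hE₁, hE₂]
    linear_combination hθ - h0
  have hne : ∀ θ, E₁ θ ≠ 0 := fun θ => Complex.exp_ne_zero _
  have hc0 : E₁ 0 - E₂ 0 = 0 := by
    by_contra hc
    set c := E₁ 0 - E₂ 0 with hcdef
    set c' := E₁ 0 ^ 2 - E₂ 0 ^ 2 with hc'def
    have h2c : (2 : ℂ) * c ≠ 0 := mul_ne_zero two_ne_zero hc
    have hconst : ∀ θ, E₁ θ = (c * c + c') / (2 * c) := by
      intro θ
      have hA := key1 θ
      have hB := key2 θ
      have hsum : (E₁ θ + E₂ θ) * c = c' := by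
        linear_combination hB - (E₁ θ + E₂ θ) * hA
      rw [eq_div_iff h2c]
      linear_combination c * hA + hsum
    have hπ : (0:ℝ) < Real.pi := Real.pi_pos
    have hmem : φ₁ 0 + Real.pi ∈ Set.Icc (φ₁ 0) (φ₁ (2 * Real.pi)) := by
      have := hlift₁ 0
      rw [zero_add] at this
      constructor <;> [linarith; linarith [this]]
    obtain ⟨θ₀, _, hθ₀⟩ := intermediate_value_Icc (by linarith)
      (hφ₁.continuous.continuousOn (s := Set.Icc 0 (2 * Real.pi))) hmem
    have hE : E₁ θ₀ = E₁ 0 := by rw [hconst θ₀, hconst 0]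
    have hcontr : Complex.exp (Complex.I * φ₁ 0) * -1 = Complex.exp (Complex.I * φ₁ 0) := by
      have : Complex.exp (Complex.I * (φ₁ 0 + Real.pi)) = Complex.exp (Complex.I * φ₁ 0) := by
        simpa [hE₁, hθ₀] using hE
      rw [show (Complex.I * ((φ₁ 0 : ℂ) + Real.pi)) = Complex.I * φ₁ 0 + Real.pi * Complex.I by
        push_cast; ring, Complex.exp_add, Complex.exp_pi_mul_I] at this
      linear_combination this
    exact Complex.exp_ne_zero (Complex.I * (φ₁ 0 : ℂ)) (by linear_combination -hcontr / 2)
  intro θ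
  have heq : E₁ θ = E₂ θ := sub_eq_zero.mp (by rw [key1 θ, hc0])
  have hone : Complex.exp (Complex.I * φ₁ θ - Complex.I * φ₂ θ) = 1 := by
    rw [Complex.exp_sub]
    simp only [hE₁, hE₂] at heq
    rw [heq, div_self (Complex.exp_ne_zero _)]
  obtain ⟨n, hn⟩ := Complex.exp_eq_one_iff.mp hone
  refine ⟨n, ?_⟩
  have h2 : Complex.I * ((φ₁ θ : ℂ) - φ₂ θ) = Complex.I * ((2 * Real.pi * n : ℝ) : ℂ) := by
    push_cast
    linear_combination hn
  have h3 := mul_left_cancel₀ Complex.I_ne_zero h2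
  exact_mod_cast h3
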